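/- Let C and Ĉ_M be positive self-adjoint bounded operators on a Hilbert space, λ > 0, and suppose η := ‖(C+λI)^{-1/2}(C - Ĉ_M)(C+λI)^{-1/2}‖ < 1. Then ‖(Ĉ_M + λI)^{-1/2} (C + λI)^{1/2}‖² ≤ (1 - η)^{-1}. -/

import Mathlib

open ContinuousLinearMap
open scoped RealInnerProductSpace

/-- For positive self-adjoint `C`, `Ĉ_M` and `λ > 0`, if
`η = ‖(C+λI)^{-1/2}(C - Ĉ_M)(C+λI)^{-1/2}‖ < 1`, then
`‖(Ĉ_M + λI)^{-1/2} (C + λI)^{1/2}‖² ≤ (1 - η)⁻¹`.  Here `JC` is the positive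
square root of the inverse of `C + λI`, `RC` the positive square root of
`C + λI`, and `JM` the positive square root of the inverse of `Ĉ_M + λI`. -/
theorem stmt8 {H : Type*} [NormedAddCommGroup H] [InnerProductSpace ℝ H]
    [CompleteSpace H] [TopologicalSpace.SeparableSpace H]
    (C CM JC RC JM : H →L[ℝ] H) (lam : ℝ) (hlam : 0 < lam)
    (hC : C.IsPositive) (hCM : CM.IsPositive)
    (hJCpos : JC.IsPositive)
    (hJC1 : (JC ∘L JC) ∘L (C + lam • 1) = 1)
    (hJC2 : (C + lam • 1) ∘L (JC ∘L JC) = 1)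
    (hcommJC : Commute JC C)
    (hRCpos : RC.IsPositive) (hRC : RC ∘L RC = C + lam • 1)
    (hcommRC : Commute RC C)
    (hJMpos : JM.IsPositive)
    (hJM1 : (JM ∘L JM) ∘L (CM + lam • 1) = 1)
    (hJM2 : (CM + lam • 1) ∘L (JM ∘L JM) = 1)
    (hcommJM : Commute JM CM)
    (heta : ‖JC ∘L (C - CM) ∘L JC‖ < 1) :
    ‖JM ∘L RC‖ ^ 2 ≤ (1 - ‖JC ∘L (C - CM) ∘L JC‖)⁻¹ := by
  set S := C + lam • 1 with hSdef
  set SM := CM + lam • 1 with hSMdef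
  set E := JC ∘L (C - CM) ∘L JC with hEdef
  set η := ‖E‖ with hetadef
  have hη0 : 0 ≤ η := norm_nonneg _
  have h1η : 0 < 1 - η := by linarith
  have hid : IsSelfAdjoint (lam • (1 : H →L[ℝ] H)) := by
    simp [IsSelfAdjoint, star_smul]
  have hSsa : IsSelfAdjoint S := hC.isSelfAdjoint.add hid
  have hSMsa : IsSelfAdjoint SM := hCM.isSelfAdjoint.add hid
  have symS : ∀ x y : H, ⟪S x, y⟫ = ⟪x, S y⟫ := fun x y => hSsa.isSymmetric x y
  have symSM : ∀ x y : H, ⟪SM x, y⟫ = ⟪x, SM y⟫ := fun x y => hSMsa.isSymmetric x y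
  have symJC : ∀ x y : H, ⟪JC x, y⟫ = ⟪x, JC y⟫ := fun x y => hJCpos.1 x y
  have symRC : ∀ x y : H, ⟪RC x, y⟫ = ⟪x, RC y⟫ := fun x y => hRCpos.1 x y
  have hc1 : ∀ T : H →L[ℝ] H, Commute T (lam • (1 : H →L[ℝ] H)) := by
    intro T; simp [Commute, SemiconjBy, mul_smul_comm, smul_mul_assoc]
  have hcS : Commute JC S := hcommJC.add_right (hc1 JC)
  have hcSM : Commute JM SM := hcommJM.add_right (hc1 JM)
  have hmS : S * (JC * JC) = 1 := by rw [mul_def, mul_def]; exact hJC2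
  have hmSM : SM * (JM * JM) = 1 := by rw [mul_def, mul_def]; exact hJM2
  -- JC inverts S on the left after squaring
  have hJCS1 : JC * (S * JC) = 1 := by
    rw [← mul_assoc, hcS.eq, mul_assoc, hmS]
  have hJMSM1 : JM * (SM * JM) = 1 := by
    rw [← mul_assoc, hcSM.eq, mul_assoc, hmSM]
  have keyop : JC * (S * (S * JC)) = S := by
    have h2 : Commute JC (S * S) := hcS.mul_right hcS
    calc JC * (S * (S * JC)) = JC * (S * S) * JC := by noncomm_ring
    _ = (S * S) * JC * JC := by rw [h2.eq]
    _ = S * (S * (JC * JC)) := by noncomm_ring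
    _ = S := by rw [hmS, mul_one]
  -- Key quadratic form inequality
  have key : ∀ w : H, (1 - η) * ⟪S w, w⟫ ≤ ⟪SM w, w⟫ := by
    intro w
    set z := S (JC w) with hzdef
    have hz1 : JC z = w := by
      have := congrFun (congrArg DFunLike.coe hJCS1) w
      simpa [mul_apply] using this
    have hz2 : ⟪z, z⟫ = ⟪S w, w⟫ := by
      have hk : JC (S (S (JC w))) = S w := by
        have := congrFun (congrArg DFunLike.coe keyop) w
        simpa [mul_apply] using this
      calc ⟪z, z⟫ = ⟪JC w, S z⟫ := symS _ _
      _ = ⟪w, JC (S (S (JC w)))⟫ := symJC _ _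
      _ = ⟪w, S w⟫ := by rw [hk]
      _ = ⟪S w, w⟫ := real_inner_comm _ _
    have hEz : ⟪E z, z⟫ = ⟪(C - CM) w, w⟫ := by
      have : E z = JC ((C - CM) (JC z)) := by simp [hEdef, comp_apply]
      rw [this, symJC, hz1]
    have hbound : ⟪(C - CM) w, w⟫ ≤ η * ⟪S w, w⟫ := by
      rw [← hEz, ← hz2]
      calc ⟪E z, z⟫ ≤ ‖E z‖ * ‖z‖ := real_inner_le_norm _ _
      _ ≤ (η * ‖z‖) * ‖z‖ := by
          have := E.le_opNorm z
          exact mul_le_mul_of_nonneg_right this (norm_nonneg _)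
      _ = η * ⟪z, z⟫ := by rw [real_inner_self_eq_norm_mul_norm]; ring
    have hSM : ⟪SM w, w⟫ = ⟪S w, w⟫ - ⟪(C - CM) w, w⟫ := by
      have : SM w = S w - (C - CM) w := by
        simp [hSdef, hSMdef, add_apply, sub_apply]; abel
      rw [this, inner_sub_left]
    rw [hSM]; nlinarith [hbound]
  -- pointwise norm bound for RC ∘L JM
  set r := (1 - η)⁻¹ with hrdef
  have hr0 : 0 ≤ r := le_of_lt (by positivity)
  have hptsq : ∀ y : H, ‖(RC ∘L JM) y‖ ^ 2 ≤ r * ‖y‖ ^ 2 := by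
    intro y
    set w := JM y with hwdef
    have h1 : ‖(RC ∘L JM) y‖ ^ 2 = ⟪S w, w⟫ := by
      have hS : RC (RC w) = S w := by
        have := congrFun (congrArg DFunLike.coe hRC) w
        simpa [comp_apply] using this
      calc ‖(RC ∘L JM) y‖ ^ 2 = ⟪RC w, RC w⟫ := by
            rw [real_inner_self_eq_norm_mul_norm]; simp [comp_apply, sq]; rfl
      _ = ⟪w, RC (RC w)⟫ := symRC _ _
      _ = ⟪w, S w⟫ := by rw [hS]
      _ = ⟪S w, w⟫ := real_inner_comm _ _
    have h2 : ⟪SM w, w⟫ = ‖y‖ ^ 2 := by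
      have hk : JM (SM (JM y)) = y := by
        have := congrFun (congrArg DFunLike.coe hJMSM1) y
        simpa [mul_apply] using this
      calc ⟪SM w, w⟫ = ⟪SM (JM y), JM y⟫ := rfl
      _ = ⟪JM (SM (JM y)), y⟫ := (hJMpos.1 _ _).symm
      _ = ⟪y, y⟫ := by rw [hk]
      _ = ‖y‖ ^ 2 := by rw [real_inner_self_eq_norm_mul_norm, sq]
    have hSw := key w
    rw [h2] at hSw
    rw [h1, hrdef]
    calc ⟪S w, w⟫ = (1 - η)⁻¹ * ((1 - η) * ⟪S w, w⟫) := by field_simp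
    _ ≤ (1 - η)⁻¹ * ‖y‖ ^ 2 := mul_le_mul_of_nonneg_left hSw (by positivity)
  have hpt : ∀ y : H, ‖(RC ∘L JM) y‖ ≤ Real.sqrt r * ‖y‖ := by
    intro y
    have h := hptsq y
    calc ‖(RC ∘L JM) y‖ = Real.sqrt (‖(RC ∘L JM) y‖ ^ 2) := (Real.sqrt_sq (norm_nonneg _)).symm
    _ ≤ Real.sqrt (r * ‖y‖ ^ 2) := Real.sqrt_le_sqrt h
    _ = Real.sqrt r * ‖y‖ := by
        rw [Real.sqrt_mul hr0, Real.sqrt_sq (norm_nonneg _)]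
  have hnorm : ‖RC ∘L JM‖ ≤ Real.sqrt r :=
    opNorm_le_bound _ (Real.sqrt_nonneg _) hpt
  have hadj : ‖JM ∘L RC‖ = ‖RC ∘L JM‖ := by
    have h : adjoint (RC ∘L JM) = JM ∘L RC := by
      rw [adjoint_comp, hJMpos.isSelfAdjoint.adjoint_eq, hRCpos.isSelfAdjoint.adjoint_eq]
    rw [← h, LinearIsometryEquiv.norm_map]
  rw [hadj]
  calc ‖RC ∘L JM‖ ^ 2 ≤ (Real.sqrt r) ^ 2 :=
        pow_le_pow_left₀ (norm_nonneg _) hnorm 2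
  _ = r := Real.sq_sqrt hr0
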